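/- Let D > 0 be not a perfect square and (1,2)-primitive, meaning D ≡ 0, 1, or 4 (mod 8) and there is no integer f > 1 with D = f²D' for some D' ≡ 0, 1, or 4 (mod 8). Let e be an integer with e² < D and e² ≡ D (mod 8). Then the number of triples (a,b,d) of integers with a > 0, d > 0, 0 ≤ b < a, ad = (D - e²)/8, and gcd(a,b,d,e) = 1 equals σ₁((D - e²)/8). -/

import Mathlib

/-- Let `D > 0` be a non-square `(1,2)`-primitive discriminant (`D ≡ 0,1,4 (mod 8)` and
there is no `f > 1` with `D = f²·D'` for a discriminant `D' ≡ 0,1,4 (mod 8)`), and let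
`e` be an integer with `e² < D` and `e² ≡ D (mod 8)`. Then the number of triples `(a,b,d)`
with `a > 0`, `d > 0`, `0 ≤ b < a`, `ad = (D - e²)/8` and `gcd(a,b,d,e) = 1` equals
`σ₁((D - e²)/8)`. -/
theorem prototype_count_primitive (D e : ℤ) (hD : 0 < D) (hsq : ¬ IsSquare D)
    (hmod : D % 8 = 0 ∨ D % 8 = 1 ∨ D % 8 = 4)
    (hprim : ¬ ∃ f D' : ℤ, 1 < f ∧ D = f ^ 2 * D' ∧
      (D' % 8 = 0 ∨ D' % 8 = 1 ∨ D' % 8 = 4))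
    (he : e ^ 2 < D) (hcong : e ^ 2 % 8 = D % 8)
    (n : ℕ) (hn : (n : ℤ) = (D - e ^ 2) / 8) :
    {p : ℤ × ℤ × ℤ | 0 < p.1 ∧ 0 < p.2.2 ∧ 0 ≤ p.2.1 ∧ p.2.1 < p.1 ∧
        p.1 * p.2.2 = (D - e ^ 2) / 8 ∧
        Int.gcd p.1 (Int.gcd p.2.1 (Int.gcd p.2.2 e)) = 1}.Finite ∧
      {p : ℤ × ℤ × ℤ | 0 < p.1 ∧ 0 < p.2.2 ∧ 0 ≤ p.2.1 ∧ p.2.1 < p.1 ∧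
        p.1 * p.2.2 = (D - e ^ 2) / 8 ∧
        Int.gcd p.1 (Int.gcd p.2.1 (Int.gcd p.2.2 e)) = 1}.ncard
        = ArithmeticFunction.sigma 1 n := by
  -- basic arithmetic facts
  have h8 : (8:ℤ) ∣ D - e ^ 2 := by omega
  obtain ⟨m, hm⟩ := h8
  have hdiv : (D - e ^ 2) / 8 = m := by omega
  have hnm : (n : ℤ) = m := by rw [hn, hdiv]
  have hmpos : 0 < m := by nlinarith
  have hnpos : 0 < n := by exact_mod_cast hnm ▸ hmpos
  -- key lemma: gcd condition is automatic
  have key : ∀ a b d : ℤ, 0 < a → 0 < d → a * d = (D - e ^ 2) / 8 →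
      Int.gcd a (Int.gcd b (Int.gcd d e)) = 1 := by
    intro a b d ha hd had
    rw [hdiv] at had
    by_contra hne
    set g : ℕ := Int.gcd a (Int.gcd b (Int.gcd d e)) with hg
    have hga : (g:ℤ) ∣ a := Int.gcd_dvd_left a _
    have hgi : (g:ℤ) ∣ ((Int.gcd b ((Int.gcd d e : ℤ)) : ℤ)) := Int.gcd_dvd_right a _
    have hgde : (g:ℤ) ∣ ((Int.gcd d e : ℤ)) := hgi.trans (Int.gcd_dvd_right b _)
    have hgd : (g:ℤ) ∣ d := hgde.trans (Int.gcd_dvd_left d e)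
    have hge : (g:ℤ) ∣ e := hgde.trans (Int.gcd_dvd_right d e)
    have hg0 : g ≠ 0 := by
      intro h0
      rw [h0] at hga
      simp at hga
      omega
    have hg2 : 2 ≤ g := by omega
    obtain ⟨a₁, ha₁⟩ := hga
    obtain ⟨d₁, hd₁⟩ := hgd
    obtain ⟨e₁, he₁⟩ := hge
    apply hprim
    refine ⟨(g:ℤ), e₁ ^ 2 + 8 * (a₁ * d₁), by exact_mod_cast hg2, ?_, ?_⟩
    · have hDeq : D = e ^ 2 + 8 * (a * d) := by omega
      rw [hDeq, ha₁, hd₁, he₁]; ring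
    · have h2 : (e₁ % 8) ^ 2 % 8 = e₁ ^ 2 % 8 :=
        Int.ModEq.pow 2 (Int.emod_emod_of_dvd e₁ dvd_rfl)
      have h1 : e₁ % 8 = 0 ∨ e₁ % 8 = 1 ∨ e₁ % 8 = 2 ∨ e₁ % 8 = 3 ∨ e₁ % 8 = 4 ∨
          e₁ % 8 = 5 ∨ e₁ % 8 = 6 ∨ e₁ % 8 = 7 := by omega
      rcases h1 with h|h|h|h|h|h|h|h <;> rw [h] at h2 <;> norm_num at h2 <;> omega
  -- the counting finset
  set T : Finset (ℤ × ℤ × ℤ) := n.divisorsAntidiagonal.biUnion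
    (fun q => (Finset.range q.1).image (fun b : ℕ => ((q.1 : ℤ), ((b : ℤ), (q.2 : ℤ))))) with hT
  have hST : {p : ℤ × ℤ × ℤ | 0 < p.1 ∧ 0 < p.2.2 ∧ 0 ≤ p.2.1 ∧ p.2.1 < p.1 ∧
        p.1 * p.2.2 = (D - e ^ 2) / 8 ∧
        Int.gcd p.1 (Int.gcd p.2.1 (Int.gcd p.2.2 e)) = 1} = ↑T := by
    ext ⟨a, b, d⟩
    simp only [Set.mem_setOf_eq, hT, Finset.coe_biUnion, Set.mem_iUnion,
      Finset.mem_coe, Finset.mem_image, Finset.mem_range, Nat.mem_divisorsAntidiagonal,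
      Prod.exists]
    constructor
    · rintro ⟨ha, hd, hb0, hba, had, -⟩
      refine ⟨a.toNat, d.toNat, ⟨?_, hnpos.ne'⟩, b.toNat, ?_, ?_⟩
      · have : ((a.toNat * d.toNat : ℕ) : ℤ) = (n : ℤ) := by
          push_cast
          rw [Int.toNat_of_nonneg ha.le, Int.toNat_of_nonneg hd.le, hn, had]
        exact_mod_cast this
      · omega
      · simp only [Prod.mk.injEq]
        refine ⟨?_, ?_, ?_⟩ <;> omega
    · rintro ⟨x, y, ⟨hxy, -⟩, c, hc, heq⟩
      simp only [Prod.mk.injEq] at heq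
      obtain ⟨h1, h2, h3⟩ := heq
      have hx0 : 0 < x := by
        rcases Nat.eq_zero_or_pos x with h | h
        · exfalso; rw [h] at hxy; simp at hxy; omega
        · exact h
      have hy0 : 0 < y := by
        rcases Nat.eq_zero_or_pos y with h | h
        · exfalso; rw [h] at hxy; simp at hxy; omega
        · exact h
      have ha : 0 < a := by rw [← h1]; exact_mod_cast hx0
      have hd : 0 < d := by rw [← h3]; exact_mod_cast hy0
      have had : a * d = (D - e ^ 2) / 8 := by
        rw [← h1, ← h3, ← hn]
        exact_mod_cast hxy
      refine ⟨ha, hd, by omega, by omega, had, key a b d ha hd had⟩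
  constructor
  · rw [hST]; exact T.finite_toSet
  · rw [hST, Set.ncard_coe_finset]
    have hcard : T.card = ∑ q ∈ n.divisorsAntidiagonal, q.1 := by
      rw [hT, Finset.card_biUnion]
      · refine Finset.sum_congr rfl (fun q hq => ?_)
        have hinj : Function.Injective (fun b : ℕ => ((q.1 : ℤ), ((b : ℤ), (q.2 : ℤ)))) := by
          intro x y hxy
          simp only [Prod.mk.injEq] at hxy
          exact_mod_cast hxy.2.1
        rw [Finset.card_image_of_injective _ hinj, Finset.card_range]
      · intro p hp q hq hpq
        simp only [Finset.disjoint_left, Finset.mem_image, Finset.mem_range]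
        rintro z ⟨c, hc, rfl⟩ ⟨c', hc', heq⟩
        apply hpq
        simp only [Prod.mk.injEq] at heq
        obtain ⟨hh1, hh2, hh3⟩ := heq
        exact Prod.ext (by exact_mod_cast hh1.symm) (by exact_mod_cast hh3.symm)
    rw [hcard, ArithmeticFunction.sigma_one_apply]
    exact Nat.sum_divisorsAntidiagonal (fun i _ => i)
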